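/- Let Γ be a finite Büchi game with positions V and let v₀ be a position. If a strategy S of Player 0 from v₀ is positional, then S is strictly absorption-dominant: there is no strategy S' ≠ S from v₀ with S' ⪰ S. -/

import Mathlib

/-- A Büchi game: positions `V` partitioned into Player 0's positions `V0` and
Player 1's positions `V1`, edge relation `E` with every position having a
successor, and target set `F`. -/
structure BuchiGame (V : Type*) where
  V0 : Set V
  V1 : Set V
  E : V → V → Prop
  F : Set V
  cover : ∀ v, v ∈ V0 ∨ v ∈ V1
  disjoint : ∀ v, ¬(v ∈ V0 ∧ v ∈ V1)
  nonempty_succ : ∀ v, ∃ w, E v w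

/-- A strategy of Player 0 from `v0`, represented as a subtree of the tree
unraveling of the game: a set of finite paths from `v0` which is prefix-closed,
has a unique chosen successor at nodes ending in Player 0 positions, and all
successors at nodes ending in Player 1 positions. -/
structure BuchiStrategy {V : Type*} (G : BuchiGame V) (v0 : V) where
  tree : Set (List V)
  root_mem : [v0] ∈ tree
  isPath : ∀ ρ ∈ tree, ρ.head? = some v0 ∧ List.Chain' G.E ρ
  prefix_closed : ∀ (ρ : List V) (v : V), ρ ≠ [] → ρ ++ [v] ∈ tree → ρ ∈ tree
  choice0 : ∀ (ρ : List V) (v : V), ρ ++ [v] ∈ tree → v ∈ G.V0 →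
    ∃! w : V, ρ ++ [v, w] ∈ tree
  choice1 : ∀ (ρ : List V) (v : V), ρ ++ [v] ∈ tree → v ∈ G.V1 →
    ∀ w : V, G.E v w → ρ ++ [v, w] ∈ tree

namespace BuchiStrategy

variable {V : Type*} {G : BuchiGame V} {v0 : V}

/-- The number of occurrences (in `ℕ∞`) of the edge `e` in the strategy tree. -/
noncomputable def edgeCount (S : BuchiStrategy G v0) (e : V × V) : ℕ∞ :=
  {ρ : List V | ρ ++ [e.1, e.2] ∈ S.tree}.encard

/-- `S₁` absorbs `S₂`: every edge occurs in `S₁` at most as often as in `S₂`. -/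
def Absorbs (S₁ S₂ : BuchiStrategy G v0) : Prop :=
  ∀ e : V × V, S₁.edgeCount e ≤ S₂.edgeCount e

/-- `S₁` strictly absorbs `S₂`. -/
def StrictlyAbsorbs (S₁ S₂ : BuchiStrategy G v0) : Prop :=
  Absorbs S₁ S₂ ∧ ∃ e : V × V, S₁.edgeCount e < S₂.edgeCount e

/-- A strategy is absorption-dominant from `v0` if no strategy strictly absorbs it. -/
def AbsorptionDominant (S : BuchiStrategy G v0) : Prop :=
  ∀ S' : BuchiStrategy G v0, ¬ StrictlyAbsorbs S' S

/-- A strategy is positional if all occurrences of any Player 0 position have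
the same chosen successor. -/
def Positional (S : BuchiStrategy G v0) : Prop :=
  ∀ v ∈ G.V0, ∀ (ρ ρ' : List V) (w w' : V),
    ρ ++ [v, w] ∈ S.tree → ρ' ++ [v, w'] ∈ S.tree → w = w'

/-- An infinite play consistent with the strategy: all finite prefixes lie in
the strategy tree. -/
def ConsistentPlay (S : BuchiStrategy G v0) (f : ℕ → V) : Prop :=
  ∀ n : ℕ, (List.range (n + 1)).map f ∈ S.tree

/-- A strategy is winning if every consistent play visits `F` infinitely often. -/
def Winning (S : BuchiStrategy G v0) : Prop :=
  ∀ f : ℕ → V, S.ConsistentPlay f → ∀ n : ℕ, ∃ m : ℕ, n ≤ m ∧ f m ∈ G.F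

end BuchiStrategy

private lemma buchi_two_le_decomp {V : Type*} (a b : V) (t : List V) :
    ∃ ρ v w, a :: b :: t = ρ ++ [v, w] := by
  induction t generalizing a b with
  | nil => exact ⟨[], a, b, rfl⟩
  | cons c t ih =>
    obtain ⟨ρ, v, w, h⟩ := ih b c
    exact ⟨a :: ρ, v, w, by rw [List.cons_append, ← h]⟩

open BuchiStrategy in
/-- In a finite Büchi game, every positional strategy of Player 0 from `v0` is
strictly absorption-dominant: no other strategy absorbs it. -/
theorem positional_strictly_absorption_dominant {V : Type*} [Fintype V]
    {G : BuchiGame V} {v0 : V} (S : BuchiStrategy G v0)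
    (hpos : S.Positional) :
    ¬ ∃ S' : BuchiStrategy G v0, S' ≠ S ∧ S'.Absorbs S := by
  rintro ⟨S', hne, habs⟩
  -- Step 1: S'.tree ⊆ S.tree
  have key : ∀ n (l : List V), l.length = n → l ∈ S'.tree → l ∈ S.tree := by
    intro n
    induction n using Nat.strong_induction_on with
    | _ n ih =>
      intro l hlen hl
      obtain ⟨hhead, hchain⟩ := S'.isPath l hl
      match l with
      | [] => simp at hhead
      | [a] =>
        simp only [List.head?_cons, Option.some.injEq] at hhead
        subst hhead
        exact S.root_mem
      | a :: b :: t =>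
        obtain ⟨ρ, v, w, heq⟩ := buchi_two_le_decomp a b t
        rw [heq] at hl hchain hlen ⊢
        have hl' : (ρ ++ [v]) ++ [w] ∈ S'.tree := by rw [List.append_assoc]; exact hl
        have hpre : ρ ++ [v] ∈ S'.tree := S'.prefix_closed _ w (by simp) hl'
        have hpreS : ρ ++ [v] ∈ S.tree := by
          refine ih (ρ ++ [v]).length ?_ _ rfl hpre
          simp only [List.length_append, List.length_cons, List.length_singleton] at hlen ⊢
          omega
        have hE : G.E v w := by
          have hc : List.Chain' G.E ((ρ ++ [v]) ++ [w]) := by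
            rw [List.append_assoc]; exact hchain
          replace hc := List.isChain_append.mp hc
          exact hc.2.2 v (by simp) w (by simp)
        rcases G.cover v with hv0 | hv1
        · by_contra hnot
          obtain ⟨σ, hσ, -⟩ := S.choice0 ρ v hpreS hv0
          have hzero : S.edgeCount (v, w) = 0 := by
            rw [edgeCount, Set.encard_eq_zero]
            apply Set.eq_empty_iff_forall_notMem.mpr
            intro π hπ
            have hws : w = σ := hpos v hv0 π ρ w σ hπ hσ
            exact hnot (hws ▸ hσ)
          have h1 : S'.edgeCount (v, w) = 0 := le_antisymm (hzero ▸ habs (v, w)) (zero_le)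
          rw [edgeCount, Set.encard_eq_zero] at h1
          exact absurd hl (Set.eq_empty_iff_forall_notMem.mp h1 ρ)
        · exact S.choice1 ρ v hpreS hv1 w hE
  -- Step 2: S.tree ⊆ S'.tree
  have key2 : ∀ n (l : List V), l.length = n → l ∈ S.tree → l ∈ S'.tree := by
    intro n
    induction n using Nat.strong_induction_on with
    | _ n ih =>
      intro l hlen hl
      obtain ⟨hhead, hchain⟩ := S.isPath l hl
      match l with
      | [] => simp at hhead
      | [a] =>
        simp only [List.head?_cons, Option.some.injEq] at hhead
        subst hhead
        exact S'.root_mem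
      | a :: b :: t =>
        obtain ⟨ρ, v, w, heq⟩ := buchi_two_le_decomp a b t
        rw [heq] at hl hchain hlen ⊢
        have hl' : (ρ ++ [v]) ++ [w] ∈ S.tree := by rw [List.append_assoc]; exact hl
        have hpre : ρ ++ [v] ∈ S.tree := S.prefix_closed _ w (by simp) hl'
        have hpreS' : ρ ++ [v] ∈ S'.tree := by
          refine ih (ρ ++ [v]).length ?_ _ rfl hpre
          simp only [List.length_append, List.length_cons, List.length_singleton] at hlen ⊢
          omega
        have hE : G.E v w := by
          have hc : List.Chain' G.E ((ρ ++ [v]) ++ [w]) := by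
            rw [List.append_assoc]; exact hchain
          replace hc := List.isChain_append.mp hc
          exact hc.2.2 v (by simp) w (by simp)
        rcases G.cover v with hv0 | hv1
        · obtain ⟨w', hw', -⟩ := S'.choice0 ρ v hpreS' hv0
          have hwS : ρ ++ [v, w'] ∈ S.tree := key _ _ rfl hw'
          obtain ⟨σ, hσ, huniq⟩ := S.choice0 ρ v hpre hv0
          have h1 : w = σ := huniq w hl
          have h2 : w' = σ := huniq w' hwS
          rw [h1, ← h2]
          exact hw'
        · exact S'.choice1 ρ v hpreS' hv1 w hE
  apply hne
  have htree : S'.tree = S.tree :=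
    Set.Subset.antisymm (fun l hl => key _ l rfl hl) (fun l hl => key2 _ l rfl hl)
  cases S'; cases S
  simp only at htree
  subst htree
  rfl
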